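/- Let ((g,[2]),D) be a ResLieDer pair over F and let (μ_i, σ_i, D_i)_{i≥0} be a 1-parameter formal deformation of ((g,[2]),D). Then ((μ₁,σ₁),D₁) is a 2-cocycle of ((g,[2]),D) with adjoint coefficients; explicitly, for all x,y,z ∈ g: [x,μ₁(y,z)] + μ₁(x,[y,z]) + [y,μ₁(z,x)] + μ₁(y,[z,x]) + [z,μ₁(x,y)] + μ₁(z,[x,y]) = 0; [x,μ₁(x,y)] + μ₁(x^[2],y) + μ₁([x,y],x) + [y,σ₁(x)] = 0; D₁([x,y]) + [x,D₁(y)] + [y,D₁(x)] + μ₁(D(x),y) + μ₁(x,D(y)) + D(μ₁(x,y)) = 0; and D₁(x^[2]) + [x,D₁(x)] + D(σ₁(x)) + μ₁(x,D(x)) = 0. -/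

import Mathlib

/-- the infinitesimal `((μ₁,σ₁),D₁)` of a 1-parameter formal deformation of a
ResLieDer pair `((g,[2]),D)` is a 2-cocycle with adjoint coefficients. -/
theorem stmt6
    {F : Type*} [Field F] [CharP F 2]
    {g : Type*} [LieRing g] [LieAlgebra F g]
    (sq : g → g)
    (hsq_ad : ∀ x y : g, ⁅sq x, y⁆ = ⁅x, ⁅x, y⁆⁆)
    (hsq_smul : ∀ (a : F) (x : g), sq (a • x) = a ^ 2 • sq x)
    (hsq_add : ∀ x y : g, sq (x + y) = sq x + sq y + ⁅x, y⁆)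
    (D : g →ₗ[F] g)
    (hD_br : ∀ x y : g, D ⁅x, y⁆ = ⁅D x, y⁆ + ⁅x, D y⁆)
    (hD_sq : ∀ x : g, D (sq x) = ⁅x, D x⁆)
    -- a 1-parameter formal deformation (μᵢ, σᵢ, Dᵢ)
    (μ : ℕ → g → g → g) (σ : ℕ → g → g) (Dd : ℕ → g →ₗ[F] g)
    (hμ₁ : ∀ (i : ℕ) (a : F) (x x' y : g), μ i (a • x + x') y = a • μ i x y + μ i x' y)
    (hμ₂ : ∀ (i : ℕ) (a : F) (x y y' : g), μ i x (a • y + y') = a • μ i x y + μ i x y')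
    (hμalt : ∀ (i : ℕ) (x : g), μ i x x = 0)
    (hμ0 : ∀ x y : g, μ 0 x y = ⁅x, y⁆)
    (hσ0 : ∀ x : g, σ 0 x = sq x)
    (hD0 : Dd 0 = D)
    (hσ_smul : ∀ (i : ℕ) (a : F) (x : g), σ i (a • x) = a ^ 2 • σ i x)
    (hσ_add : ∀ (i : ℕ) (x y : g), σ i (x + y) = σ i x + σ i y + μ i x y)
    (heq1 : ∀ (k : ℕ) (x y z : g),
      ∑ p ∈ Finset.HasAntidiagonal.antidiagonal k,
        (μ p.1 x (μ p.2 y z) + μ p.1 y (μ p.2 z x) + μ p.1 z (μ p.2 x y)) = 0)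
    (heq2 : ∀ (k : ℕ) (x y : g),
      ∑ p ∈ Finset.HasAntidiagonal.antidiagonal k, (μ p.1 (σ p.2 x) y + μ p.1 x (μ p.2 x y)) = 0)
    (heq3 : ∀ (k : ℕ) (x y : g),
      ∑ p ∈ Finset.HasAntidiagonal.antidiagonal k,
        (Dd p.1 (μ p.2 x y) + μ p.2 (Dd p.1 x) y + μ p.2 x (Dd p.1 y)) = 0)
    (heq4 : ∀ (k : ℕ) (x : g),
      ∑ p ∈ Finset.HasAntidiagonal.antidiagonal k, (Dd p.1 (σ p.2 x) + μ p.2 x (Dd p.1 x)) = 0) :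
    ∀ x y z : g,
      (⁅x, μ 1 y z⁆ + μ 1 x ⁅y, z⁆ + ⁅y, μ 1 z x⁆ + μ 1 y ⁅z, x⁆ +
          ⁅z, μ 1 x y⁆ + μ 1 z ⁅x, y⁆ = 0) ∧
      (⁅x, μ 1 x y⁆ + μ 1 (sq x) y + μ 1 ⁅x, y⁆ x + ⁅y, σ 1 x⁆ = 0) ∧
      (Dd 1 ⁅x, y⁆ + ⁅x, Dd 1 y⁆ + ⁅y, Dd 1 x⁆ +
          μ 1 (D x) y + μ 1 x (D y) + D (μ 1 x y) = 0) ∧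
      (Dd 1 (sq x) + ⁅x, Dd 1 x⁆ + D (σ 1 x) + μ 1 x (D x) = 0) := by
  have h2 : ∀ a : g, a + a = 0 := by
    intro a
    have : (2 : F) • a = 0 := by
      rw [show (2 : F) = 0 from by exact_mod_cast CharP.cast_eq_zero F 2, zero_smul]
    simpa [two_smul] using this
  have hneg : ∀ a : g, -a = a := fun a => neg_eq_of_add_eq_zero_left (h2 a)
  have addl : ∀ (i : ℕ) (x x' y : g), μ i (x + x') y = μ i x y + μ i x' y := by
    intro i x x' y
    have := hμ₁ i 1 x x' y
    simpa using this
  have addr : ∀ (i : ℕ) (x y y' : g), μ i x (y + y') = μ i x y + μ i x y' := by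
    intro i x y y'
    have := hμ₂ i 1 x y y'
    simpa using this
  have hμsym : ∀ (i : ℕ) (x y : g), μ i x y = μ i y x := by
    intro i x y
    have h : μ i x y + μ i y x = 0 := by
      have h0 := hμalt i (x + y)
      rw [addl, addr, addr, hμalt, hμalt] at h0
      rw [← h0]; abel
    exact ((neg_eq_of_add_eq_zero_left h).symm.trans (hneg _))
  have hbsym : ∀ x y : g, ⁅x, y⁆ = ⁅y, x⁆ := by
    intro x y; rw [← lie_skew, hneg]
  have hant : Finset.HasAntidiagonal.antidiagonal 1 = ({(0,1),(1,0)} : Finset (ℕ × ℕ)) := by decide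
  have hne : ((0,1) : ℕ × ℕ) ≠ (1,0) := by decide
  intro x y z
  refine ⟨?_, ?_, ?_, ?_⟩
  · have H := heq1 1 x y z
    rw [hant, Finset.sum_pair hne] at H
    simp only [hμ0] at H
    rw [← H]
    abel
  · have H := heq2 1 x y
    rw [hant, Finset.sum_pair hne] at H
    simp only [hμ0, hσ0] at H
    rw [hbsym y, hμsym 1 ⁅x, y⁆, ← H]
    abel
  · have H := heq3 1 x y
    rw [hant, Finset.sum_pair hne] at H
    simp only [hμ0, hD0] at H
    rw [hbsym y (Dd 1 x), ← H]
    abel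
  · have H := heq4 1 x
    rw [hant, Finset.sum_pair hne] at H
    simp only [hμ0, hσ0, hD0] at H
    rw [← H]
    abel
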